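/- Let m ≥ 1 and let H(ξ) be any measurable function on the unit cube D = {ξ ∈ ℝⁿ : |ξ_j| ≤ 1 for all j} of the form Ĥ(ξ) = w(ξ)·ĥ(ξ) with |w(ξ)| = (1+S|ξ|)^{-m/(2(m+2))} for a parameter S ≥ 0. If ĥ(ξ) = ξ₁^l for l ∈ ℕ, then ∫_D ξ₁^{2l}(1+S|ξ|)^{-m/(m+2)} dξ ≤ C_m (1+S)^{-m/(m+2)} ∫_D ξ₁^{2l} dξ, with C_m = (m+2)/2 depending only on m (in particular independent of l and n beyond C_m = 1/(1 - m/(m+2)) = (m+2)/2). -/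

import Mathlib

open MeasureTheory Set


lemma oneD_integrable {s : ℝ} (hs : -1 < s) :
    IntegrableOn (fun t : ℝ => |t| ^ s) (Icc (-1:ℝ) 1) := by
  have h1 : IntegrableOn (fun t : ℝ => |t| ^ s) (Icc (0:ℝ) 1) := by
    have h : IntegrableOn (fun t : ℝ => t ^ s) (Icc (0:ℝ) 1) :=
      (intervalIntegrable_iff_integrableOn_Icc_of_le zero_le_one).mp
        (intervalIntegral.intervalIntegrable_rpow' hs)
    exact h.congr_fun (fun t ht => by rw [abs_of_nonneg ht.1]) measurableSet_Icc
  have h2 : IntegrableOn (fun t : ℝ => |t| ^ s) (Icc (-1:ℝ) 0) := by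
    have m : MeasurableEmbedding (fun x : ℝ => -x) := (Homeomorph.neg ℝ).measurableEmbedding
    have := (m.integrableOn_map_iff (f := fun t : ℝ => |t| ^ s) (s := Icc (-1:ℝ) 0)
      (μ := (volume : Measure ℝ)))
    rw [Measure.map_neg_eq_self] at this
    rw [this]
    have : ((fun x : ℝ => -x) ⁻¹' Icc (-1:ℝ) 0) = Icc (0:ℝ) 1 := by
      ext x
      simp only [mem_preimage, mem_Icc]
      constructor <;> intro h <;> constructor <;> linarith [h.1, h.2]
    rw [this]
    simpa [Function.comp_def, abs_neg] using h1
  have := h2.union h1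
  rwa [Icc_union_Icc_eq_Icc (by norm_num) (by norm_num)] at this

lemma oneD_integral {s : ℝ} (hs : -1 < s) :
    ∫ t in Icc (-1:ℝ) 1, |t| ^ s = 2 / (s + 1) := by
  have key := integral_comp_abs (f := (Icc (0:ℝ) 1).indicator (fun t => t ^ s))
  have h1 : (fun x : ℝ => (Icc (0:ℝ) 1).indicator (fun t => t ^ s) |x|)
      = (Icc (-1:ℝ) 1).indicator (fun t => |t| ^ s) := by
    ext x
    by_cases hx : x ∈ Icc (-1:ℝ) 1
    · rw [indicator_of_mem hx, indicator_of_mem (by simpa [abs_le] using hx)]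
    · rw [indicator_of_notMem hx, indicator_of_notMem (by simpa [abs_le] using hx)]
  rw [h1, integral_indicator measurableSet_Icc] at key
  rw [key, setIntegral_indicator measurableSet_Icc]
  have h2 : Ioi (0:ℝ) ∩ Icc 0 1 = Ioc (0:ℝ) 1 := by
    ext x
    simp only [mem_inter_iff, mem_Ioi, mem_Icc, mem_Ioc]
    constructor
    · rintro ⟨h, _, h2⟩; exact ⟨h, h2⟩
    · rintro ⟨h, h2⟩; exact ⟨h, le_of_lt h, h2⟩
  rw [h2, ← intervalIntegral.integral_of_le zero_le_one,
    integral_rpow (Or.inl hs), Real.one_rpow, Real.zero_rpow (by linarith)]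
  ring

lemma pi_cube (n : ℕ) (i0 : Fin n) (G : ℝ → ℝ) (hG : IntegrableOn G (Icc (-1:ℝ) 1)) :
    Integrable ({x : Fin n → ℝ | ∀ j, |x j| ≤ 1}.indicator (fun x => G (x i0))) ∧
    ∫ x, {x : Fin n → ℝ | ∀ j, |x j| ≤ 1}.indicator (fun x => G (x i0)) x
      = 2 ^ (n - 1) * ∫ t in Icc (-1:ℝ) 1, G t := by
  set f : Fin n → ℝ → ℝ := fun i t => if i = i0 then (Icc (-1:ℝ) 1).indicator G t
    else (Icc (-1:ℝ) 1).indicator (fun _ => (1:ℝ)) t with hf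
  have hfint : ∀ i, Integrable (f i) := by
    intro i
    by_cases hi : i = i0
    · simp only [hf, hi, ite_true]
      exact (integrable_indicator_iff measurableSet_Icc).mpr hG
    · simp only [hf, hi, ite_false]
      exact (integrable_indicator_iff measurableSet_Icc).mpr
        (integrableOn_const (by rw [Real.volume_Icc]; norm_num))
  have hprod : ∀ x : Fin n → ℝ, (∏ i, f i (x i))
      = {x : Fin n → ℝ | ∀ j, |x j| ≤ 1}.indicator (fun x => G (x i0)) x := by
    intro x
    by_cases hx : ∀ j, |x j| ≤ 1
    · have hmem : ∀ j, x j ∈ Icc (-1:ℝ) 1 := by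
        intro j; rw [mem_Icc, ← abs_le]; exact hx j
      rw [indicator_of_mem (show x ∈ {x : Fin n → ℝ | ∀ j, |x j| ≤ 1} from hx)]
      rw [Finset.prod_eq_single i0 (fun b _ hb => by
        simp only [hf, if_neg hb, indicator_of_mem (hmem b)]) (fun h => absurd (Finset.mem_univ i0) h)]
      simp only [hf, if_pos rfl, indicator_of_mem (hmem i0)]
    · rw [indicator_of_notMem (show x ∉ {x : Fin n → ℝ | ∀ j, |x j| ≤ 1} from hx)]
      push_neg at hx
      obtain ⟨j, hj⟩ := hx
      refine Finset.prod_eq_zero (Finset.mem_univ j) ?_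
      have hj' : x j ∉ Icc (-1:ℝ) 1 := by rw [mem_Icc, ← abs_le]; exact not_le.mpr hj
      by_cases h : j = i0
      · subst h; simp only [hf, ite_true, indicator_of_notMem hj']
      · simp only [hf, h, ite_false, indicator_of_notMem hj']
  have hint : Integrable (fun x : Fin n → ℝ => ∏ i, f i (x i)) :=
    Integrable.fintype_prod (𝕜 := ℝ) hfint
  have heq : (fun x : Fin n → ℝ => ∏ i, f i (x i))
      = {x : Fin n → ℝ | ∀ j, |x j| ≤ 1}.indicator (fun x => G (x i0)) := funext hprod
  constructor
  · rwa [heq] at hint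
  · rw [← heq, show (∫ x : Fin n → ℝ, ∏ i, f i (x i)) = ∏ i, ∫ t, f i t from
      MeasureTheory.integral_fintype_prod_eq_prod (ι := Fin n) f]
    rw [← Finset.mul_prod_erase Finset.univ _ (Finset.mem_univ i0)]
    have h1 : ∫ t, f i0 t = ∫ t in Icc (-1:ℝ) 1, G t := by
      simp only [hf, if_pos rfl]
      rw [integral_indicator measurableSet_Icc]
    have h2 : ∀ i ∈ Finset.univ.erase i0, (∫ t, f i t) = 2 := by
      intro i hi
      have hi' : i ≠ i0 := (Finset.mem_erase.mp hi).1
      simp only [hf, if_neg hi']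
      rw [integral_indicator measurableSet_Icc, setIntegral_const, Real.volume_real_Icc_of_le (by norm_num), smul_eq_mul,
        mul_one]
      norm_num
    rw [Finset.prod_congr rfl h2, Finset.prod_const, h1,
      Finset.card_erase_of_mem (Finset.mem_univ i0), Finset.card_univ, Fintype.card_fin]
    ring

lemma cube_measurable (n : ℕ) :
    MeasurableSet {x : Fin n → ℝ | ∀ j, |x j| ≤ 1} := by
  have : {x : Fin n → ℝ | ∀ j, |x j| ≤ 1} = Set.pi univ (fun _ => Icc (-1:ℝ) 1) := by
    ext x
    simp only [mem_setOf_eq, mem_pi, mem_univ, forall_true_left, mem_Icc, abs_le]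
  rw [this]
  exact MeasurableSet.univ_pi (fun _ => measurableSet_Icc)

lemma cube_eucl (n : ℕ) (hn : 0 < n) (G : ℝ → ℝ) (hG : IntegrableOn G (Icc (-1:ℝ) 1)) :
    IntegrableOn (fun ξ : EuclideanSpace ℝ (Fin n) => G (ξ ⟨0,hn⟩))
      {ξ : EuclideanSpace ℝ (Fin n) | ∀ j, |ξ j| ≤ 1} ∧
    ∫ ξ in {ξ : EuclideanSpace ℝ (Fin n) | ∀ j, |ξ j| ≤ 1}, G (ξ ⟨0,hn⟩)
      = 2 ^ (n - 1) * ∫ t in Icc (-1:ℝ) 1, G t := by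
  obtain ⟨hpint, hpval⟩ := pi_cube n ⟨0,hn⟩ G hG
  have hmp := EuclideanSpace.volume_preserving_symm_measurableEquiv_toLp (Fin n)
  have hemb := ((MeasurableEquiv.toLp 2 (Fin n → ℝ)).symm).measurableEmbedding
  have hpre : ((MeasurableEquiv.toLp 2 (Fin n → ℝ)).symm) ⁻¹' {x : Fin n → ℝ | ∀ j, |x j| ≤ 1}
      = {ξ : EuclideanSpace ℝ (Fin n) | ∀ j, |ξ j| ≤ 1} := rfl
  constructor
  · have h := (hmp.integrable_comp_emb hemb
      (g := ({x : Fin n → ℝ | ∀ j, |x j| ≤ 1}.indicator (fun x => G (x ⟨0,hn⟩))))).mpr hpint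
    have heq : ({x : Fin n → ℝ | ∀ j, |x j| ≤ 1}.indicator (fun x => G (x ⟨0,hn⟩)))
        ∘ ((MeasurableEquiv.toLp 2 (Fin n → ℝ)).symm)
        = {ξ : EuclideanSpace ℝ (Fin n) | ∀ j, |ξ j| ≤ 1}.indicator
            (fun ξ => G (ξ ⟨0,hn⟩)) := rfl
    rw [heq] at h
    exact (integrable_indicator_iff (hemb.measurable (cube_measurable n))).mp h
  · have h := hmp.setIntegral_preimage_emb hemb
      (fun x : Fin n → ℝ => G (x ⟨0,hn⟩)) {x : Fin n → ℝ | ∀ j, |x j| ≤ 1}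
    rw [hpre] at h
    rw [show (∫ ξ in {ξ : EuclideanSpace ℝ (Fin n) | ∀ j, |ξ j| ≤ 1}, G (ξ ⟨0,hn⟩)) =
      ∫ ξ in {ξ : EuclideanSpace ℝ (Fin n) | ∀ j, |ξ j| ≤ 1},
        G (((MeasurableEquiv.toLp 2 (Fin n → ℝ)).symm) ξ ⟨0,hn⟩) from rfl, h,
      ← integral_indicator (cube_measurable n), hpval]

lemma eucl_abs_le_norm {n : ℕ} (ξ : EuclideanSpace ℝ (Fin n)) (i : Fin n) :
    |ξ i| ≤ ‖ξ‖ := by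
  rw [EuclideanSpace.norm_eq, ← Real.sqrt_sq_eq_abs]
  apply Real.sqrt_le_sqrt
  have : (ξ i) ^ 2 = ‖ξ i‖ ^ 2 := by rw [Real.norm_eq_abs, sq_abs]
  rw [this]
  exact Finset.single_le_sum (f := fun j => ‖ξ j‖ ^ 2) (fun j _ => sq_nonneg _) (Finset.mem_univ i)

lemma cube_hyperplane_null (n : ℕ) (i0 : Fin n) :
    volume {ξ : EuclideanSpace ℝ (Fin n) | (∀ j, |ξ j| ≤ 1) ∧ ξ i0 = 0} = 0 := by
  set A : Set (Fin n → ℝ) :=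
    Set.pi univ (fun j => if j = i0 then ({0} : Set ℝ) else Icc (-1) 1) with hA
  have hAmeas : MeasurableSet A := MeasurableSet.univ_pi (fun j => by
    by_cases h : j = i0 <;> simp only [h, ite_true, ite_false]
    exacts [measurableSet_singleton 0, measurableSet_Icc])
  have hAvol : volume A = 0 := by
    rw [hA, volume_pi_pi]
    refine Finset.prod_eq_zero (Finset.mem_univ i0) ?_
    simp
  have hsub : {ξ : EuclideanSpace ℝ (Fin n) | (∀ j, |ξ j| ≤ 1) ∧ ξ i0 = 0}
      ⊆ ((MeasurableEquiv.toLp 2 (Fin n → ℝ)).symm) ⁻¹' A := by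
    rintro ξ ⟨h1, h2⟩
    intro j _
    by_cases h : j = i0
    · subst h
      simpa using h2
    · simpa [h, mem_Icc, abs_le] using abs_le.mp (h1 j)
  have hpre := (EuclideanSpace.volume_preserving_symm_measurableEquiv_toLp (Fin n)).measure_preimage
    hAmeas.nullMeasurableSet
  exact measure_mono_null hsub (by rw [hpre, hAvol])

/-- The monomial case in the proof of Lemma A.3: on the unit cube
`D = {ξ : |ξ_j| ≤ 1 ∀ j}`, for any `l ∈ ℕ` and `S ≥ 0`,
`∫_D ξ₁^{2l} (1+S|ξ|)^{-m/(m+2)} dξ ≤ ((m+2)/2) (1+S)^{-m/(m+2)} ∫_D ξ₁^{2l} dξ`. -/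
theorem stmt_18 (m n : ℕ) (hm : 1 ≤ m) (hn : 0 < n) (S : ℝ) (hS : 0 ≤ S) (l : ℕ) :
    (∫ ξ in {ξ : EuclideanSpace ℝ (Fin n) | ∀ j, |ξ j| ≤ 1},
        (ξ ⟨0, hn⟩) ^ (2 * l) * (1 + S * ‖ξ‖) ^ (-(m : ℝ) / ((m : ℝ) + 2)))
      ≤ (((m : ℝ) + 2) / 2) * (1 + S) ^ (-(m : ℝ) / ((m : ℝ) + 2)) *
          ∫ ξ in {ξ : EuclideanSpace ℝ (Fin n) | ∀ j, |ξ j| ≤ 1}, (ξ ⟨0, hn⟩) ^ (2 * l) := by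
  have hm1 : (1:ℝ) ≤ (m:ℝ) := by exact_mod_cast hm
  set r : ℝ := (m:ℝ) / ((m:ℝ) + 2) with hr
  have hrpos : 0 < r := div_pos (by linarith) (by linarith)
  have hr1 : r < 1 := (div_lt_one (by linarith)).mpr (by linarith)
  have hexp : -(m:ℝ) / ((m:ℝ) + 2) = -r := by rw [hr, neg_div]
  set s : ℝ := 2 * (l:ℝ) - r with hsdef
  have hs : -1 < s := by
    have : (0:ℝ) ≤ 2 * (l:ℝ) := by positivity
    rw [hsdef]; linarith
  set i0 : Fin n := ⟨0, hn⟩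
  set D : Set (EuclideanSpace ℝ (Fin n)) := {ξ | ∀ j, |ξ j| ≤ 1} with hD
  have hDmeas : MeasurableSet D :=
    ((MeasurableEquiv.toLp 2 (Fin n → ℝ)).symm).measurable (cube_measurable n)
  have hDvol : volume D ≠ ⊤ := by
    have hpre := (EuclideanSpace.volume_preserving_symm_measurableEquiv_toLp (Fin n)).measure_preimage
      (cube_measurable n).nullMeasurableSet
    rw [show volume D = volume (((MeasurableEquiv.toLp 2 (Fin n → ℝ)).symm) ⁻¹'
      {x : Fin n → ℝ | ∀ j, |x j| ≤ 1}) from rfl, hpre]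
    have : {x : Fin n → ℝ | ∀ j, |x j| ≤ 1} = Set.pi univ (fun _ => Icc (-1:ℝ) 1) := by
      ext x
      simp only [mem_setOf_eq, mem_pi, mem_univ, forall_true_left, mem_Icc, abs_le]
    rw [this, volume_pi_pi]
    simp only [Real.volume_Icc, Finset.prod_const]
    exact ENNReal.pow_ne_top ENNReal.ofReal_ne_top
  -- integrability of LHS integrand
  have hmeasF1 : Continuous (fun ξ : EuclideanSpace ℝ (Fin n) =>
      (ξ i0) ^ (2 * l) * (1 + S * ‖ξ‖) ^ (-r)) := by
    have hc0 : Continuous fun ξ : EuclideanSpace ℝ (Fin n) => ξ i0 :=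
      (continuous_apply i0).comp (PiLp.continuous_ofLp ..)
    refine (hc0.pow (2*l)).mul ?_
    refine (continuous_const.add (continuous_const.mul continuous_norm)).rpow_const ?_
    intro ξ
    left
    have : (0:ℝ) ≤ S * ‖ξ‖ := mul_nonneg hS (norm_nonneg _)
    exact (by linarith : (0:ℝ) < 1 + S * ‖ξ‖).ne'
  have hF1int : IntegrableOn (fun ξ : EuclideanSpace ℝ (Fin n) =>
      (ξ i0) ^ (2 * l) * (1 + S * ‖ξ‖) ^ (-r)) D := by
    apply Measure.integrableOn_of_bounded hDvol hmeasF1.measurable.aestronglyMeasurable (M := 1)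
    filter_upwards [ae_restrict_mem hDmeas] with ξ hξ
    have h1 : |ξ i0| ≤ 1 := hξ i0
    have h2 : (0:ℝ) ≤ 1 + S * ‖ξ‖ := by positivity
    have h3 : (1 + S * ‖ξ‖) ^ (-r) ≤ 1 :=
      Real.rpow_le_one_of_one_le_of_nonpos
        (le_add_of_nonneg_right (mul_nonneg hS (norm_nonneg _))) (neg_nonpos.mpr hrpos.le)
    rw [Real.norm_eq_abs, abs_mul, abs_pow, abs_of_nonneg (Real.rpow_nonneg h2 _)]
    calc |ξ i0| ^ (2*l) * (1 + S * ‖ξ‖) ^ (-r)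
        ≤ 1 * 1 := by
          apply mul_le_mul (pow_le_one₀ (abs_nonneg _) h1) h3 (Real.rpow_nonneg h2 _) zero_le_one
      _ = 1 := by ring
  -- integrability and values of the comparison functions
  obtain ⟨hG1int, hG1val⟩ := cube_eucl n hn (fun t => |t| ^ s) (oneD_integrable hs)
  obtain ⟨hG2int, hG2val⟩ := cube_eucl n hn (fun t => t ^ (2*l))
    ((continuous_pow (2*l)).integrableOn_Icc)
  -- pointwise bound a.e.
  have hae : ∀ᵐ ξ ∂(volume.restrict D),
      (ξ i0) ^ (2 * l) * (1 + S * ‖ξ‖) ^ (-r) ≤ (1+S) ^ (-r) * |ξ i0| ^ s := by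
    have hnull : (volume.restrict D)
        {ξ : EuclideanSpace ℝ (Fin n) | (∀ j, |ξ j| ≤ 1) ∧ ξ i0 = 0} = 0 :=
      le_antisymm (le_trans (Measure.restrict_apply_le _ _)
        (le_of_eq (cube_hyperplane_null n i0))) (by simp)
    filter_upwards [ae_restrict_mem hDmeas, measure_eq_zero_iff_ae_notMem.mp hnull] with ξ hξ hξ'
    have hne : ξ i0 ≠ 0 := fun h0 => hξ' ⟨hξ, h0⟩
    set a : ℝ := |ξ i0| with ha
    have ha0 : 0 < a := abs_pos.mpr hne
    have ha1 : a ≤ 1 := hξ i0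
    have hnorm : a ≤ ‖ξ‖ := eucl_abs_le_norm ξ i0
    have h1 : a * (1 + S) ≤ 1 + S * ‖ξ‖ := by nlinarith
    have h2 : (1 + S * ‖ξ‖) ^ (-r) ≤ (a * (1+S)) ^ (-r) :=
      Real.rpow_le_rpow_of_nonpos (by positivity) h1 (neg_nonpos.mpr hrpos.le)
    have h3 : (a * (1+S)) ^ (-r) = a ^ (-r) * (1+S) ^ (-r) :=
      Real.mul_rpow ha0.le (by positivity)
    have h4 : (ξ i0) ^ (2*l) = a ^ (2*l) := ((even_two_mul l).pow_abs _).symm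
    have h5 : a ^ (2*l) * a ^ (-r) = a ^ s := by
      rw [← Real.rpow_natCast a (2*l), ← Real.rpow_add ha0]
      congr 1
      push_cast
      linarith
    calc (ξ i0) ^ (2 * l) * (1 + S * ‖ξ‖) ^ (-r)
        ≤ a ^ (2*l) * (a ^ (-r) * (1+S) ^ (-r)) := by
          rw [h4, ← h3]
          exact mul_le_mul_of_nonneg_left h2 (pow_nonneg ha0.le _)
      _ = (1+S) ^ (-r) * a ^ s := by rw [← mul_assoc, h5]; ring
  -- put everything together
  rw [hexp]
  have step1 : (∫ ξ in D, (ξ i0) ^ (2 * l) * (1 + S * ‖ξ‖) ^ (-r))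
      ≤ ∫ ξ in D, (1+S) ^ (-r) * |ξ i0| ^ s :=
    setIntegral_mono_ae_restrict hF1int (hG1int.const_mul _) hae
  refine le_trans step1 ?_
  rw [integral_const_mul, hG1val, hG2val, oneD_integral hs]
  have hpow : ∫ t in Icc (-1:ℝ) 1, t ^ (2*l) = 2 / (2 * (l:ℝ) + 1) := by
    rw [integral_Icc_eq_integral_Ioc,
      ← intervalIntegral.integral_of_le (by norm_num : (-1:ℝ) ≤ 1), integral_pow,
      Odd.neg_one_pow ⟨l, by ring⟩, one_pow]
    push_cast
    ring
  rw [hpow]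
  -- final arithmetic
  have hP : (0:ℝ) ≤ (1+S) ^ (-r) := Real.rpow_nonneg (by linarith) _
  have hQ : (0:ℝ) ≤ (2:ℝ) ^ (n-1) := by positivity
  have hC : ((m:ℝ)+2)/2 * (1-r) = 1 := by
    rw [hr]
    field_simp
    ring
  have hden1 : (0:ℝ) < s + 1 := by linarith
  have hden2 : (0:ℝ) < 2 * (l:ℝ) + 1 := by positivity
  have hCpos : (0:ℝ) < ((m:ℝ)+2)/2 := by linarith
  have hl0 : (0:ℝ) ≤ (l:ℝ) := Nat.cast_nonneg l
  have hkey : 2 / (s + 1) ≤ ((m:ℝ)+2)/2 * (2 / (2 * (l:ℝ) + 1)) := by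
    rw [mul_div_assoc', div_le_div_iff₀ hden1 hden2, hsdef]
    nlinarith [mul_nonneg (mul_nonneg hCpos.le hrpos.le) hl0]
  nlinarith [mul_le_mul_of_nonneg_left hkey (mul_nonneg hP hQ), mul_nonneg hP hQ,
    mul_nonneg hP hP]
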